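/- The group with presentation ⟨a, b ; (ab⁻¹)³⟩ is isomorphic to the free product ℤ * ℤ/3ℤ, and hence the region core group RC of the example diagram, presented as ⟨A, B, C ; (BA⁻¹)³⟩, is isomorphic to ℤ * ℤ * ℤ/3ℤ. -/

import Mathlib

open FreeGroup Monoid Multiplicative

private abbrev Rels : Set (FreeGroup (Fin 3)) :=
  {(of (1 : Fin 3) * (of (0 : Fin 3))⁻¹) ^ 3}

private abbrev P := PresentedGroup Rels

private abbrev G := Monoid.Coprod (Monoid.Coprod (Multiplicative ℤ) (Multiplicative ℤ))
  (Multiplicative (ZMod 3))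

private def ω : P := PresentedGroup.of 1 * (PresentedGroup.of 0)⁻¹

private lemma ω_pow : ω ^ 3 = 1 := by
  have : ((of (1 : Fin 3) * (of (0 : Fin 3))⁻¹) ^ 3 : FreeGroup (Fin 3)) ∈
      Subgroup.normalClosure Rels :=
    Subgroup.subset_normalClosure rfl
  have h := (QuotientGroup.eq_one_iff
    ((of (1 : Fin 3) * (of (0 : Fin 3))⁻¹) ^ 3)).mpr this
  calc ω ^ 3 = QuotientGroup.mk ((of (1 : Fin 3) * (of (0 : Fin 3))⁻¹) ^ 3) := by
        simp [ω, PresentedGroup.of]; rfl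
    _ = 1 := h

private def fmap : Fin 3 → G :=
  ![Coprod.inl (Coprod.inl (ofAdd 1)),
    Coprod.inr (ofAdd (1 : ZMod 3)) * Coprod.inl (Coprod.inl (ofAdd 1)),
    Coprod.inl (Coprod.inr (ofAdd 1))]

private lemma lift_key : FreeGroup.lift fmap (of (1 : Fin 3) * (of (0 : Fin 3))⁻¹) =
    Coprod.inr (ofAdd (1 : ZMod 3)) := by
  rw [_root_.map_mul, _root_.map_inv, FreeGroup.lift_apply_of, FreeGroup.lift_apply_of,
    show fmap 1 = Coprod.inr (ofAdd (1 : ZMod 3)) * Coprod.inl (Coprod.inl (ofAdd 1)) from rfl,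
    show fmap 0 = Coprod.inl (Coprod.inl (ofAdd 1)) from rfl]
  exact mul_inv_cancel_right (G := G) _ _

private lemma fmap_rel : ∀ r ∈ Rels, FreeGroup.lift fmap r = 1 := by
  intro r hr
  rw [Set.mem_singleton_iff] at hr
  subst hr
  rw [map_pow, lift_key, ← map_pow, ← ofAdd_nsmul]
  have h3 : (3 • (1 : ZMod 3)) = 0 := by decide
  rw [h3, ofAdd_zero, _root_.map_one]

private def f : P →* G := PresentedGroup.toGroup fmap_rel

private lemma f_of (x : Fin 3) : f (PresentedGroup.of x) = fmap x :=
  PresentedGroup.toGroup.of fmap_rel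

private lemma f_omega : f ω = Coprod.inr (ofAdd (1 : ZMod 3)) := by
  rw [ω, _root_.map_mul, _root_.map_inv, f_of, f_of,
    show fmap 1 = Coprod.inr (ofAdd (1 : ZMod 3)) * Coprod.inl (Coprod.inl (ofAdd 1)) from rfl,
    show fmap 0 = Coprod.inl (Coprod.inl (ofAdd 1)) from rfl]
  exact mul_inv_cancel_right (G := G) _ _

private def hZ : Multiplicative (ZMod 3) →* P :=
  AddMonoidHom.toMultiplicativeLeft
    (ZMod.lift 3 ⟨zmultiplesHom (Additive P) (Additive.ofMul ω), by
      show (3 : ℤ) • Additive.ofMul ω = 0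
      rw [← ofMul_zpow, show ((3:ℤ)) = ((3:ℕ):ℤ) from rfl, zpow_natCast, ω_pow, ofMul_one]⟩)

private lemma hZ_one : hZ (ofAdd (1 : ZMod 3)) = ω := by
  have h1 : (ofAdd (1 : ZMod 3)) = ofAdd (((1 : ℤ) : ZMod 3)) := by norm_num
  rw [hZ, h1]
  simp only [AddMonoidHom.toMultiplicativeLeft_apply_apply, toAdd_ofAdd]
  rw [ZMod.lift_coe]
  simp [zmultiplesHom_apply]

private def g : G →* P :=
  Coprod.lift
    (Coprod.lift (zpowersHom P (PresentedGroup.of 0)) (zpowersHom P (PresentedGroup.of 2))) hZ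

private lemma zmod_gen (m : Multiplicative (ZMod 3)) :
    m = (ofAdd (1 : ZMod 3)) ^ (m.toAdd.val) := by
  rw [← ofAdd_nsmul]
  simp [ZMod.natCast_val, ZMod.cast_id]

private lemma fg_inl_mint (m : Multiplicative ℤ) (i : Fin 3)
    (h : fmap i = Coprod.inl (Coprod.inl (ofAdd 1))) :
    f (zpowersHom P (PresentedGroup.of i) m) = Coprod.inl (Coprod.inl m) := by
  rw [zpowersHom_apply, map_zpow, f_of, h, ← map_zpow, ← map_zpow, ← ofAdd_zsmul,
    smul_eq_mul, mul_one, ofAdd_toAdd]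

open FreeGroup in
/-- The region core group `⟨A, B, C ; (BA⁻¹)³⟩` of the example diagram is isomorphic to
`ℤ * ℤ * ℤ/3` (the free product of `⟨a, b ; (ab⁻¹)³⟩ ≅ ℤ * ℤ/3 with another `ℤ`). -/
theorem region_core_group_example :
    Nonempty
      (PresentedGroup ({(of (1 : Fin 3) * (of (0 : Fin 3))⁻¹) ^ 3} : Set (FreeGroup (Fin 3))) ≃*
        Monoid.Coprod (Monoid.Coprod (Multiplicative ℤ) (Multiplicative ℤ))
          (Multiplicative (ZMod 3))) := by
  refine ⟨MonoidHom.toMulEquiv f g ?_ ?_⟩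
  · apply PresentedGroup.ext
    intro x
    fin_cases x
    · simp [f, g, fmap]
    · simp [f, g, fmap, hZ_one, ω, mul_assoc]
    · simp [f, g, fmap]
  · apply MonoidHom.ext
    intro x
    simp only [MonoidHom.comp_apply, MonoidHom.id_apply]
    induction x using Coprod.induction_on with
    | inl y =>
      induction y using Coprod.induction_on with
      | inl m =>
        rw [g]
        simp only [Coprod.lift_apply_inl]
        rw [zpowersHom_apply, map_zpow, f_of,
          show fmap 0 = Coprod.inl (Coprod.inl (ofAdd 1)) from rfl,
          ← map_zpow, ← map_zpow, ← ofAdd_zsmul, smul_eq_mul, mul_one, ofAdd_toAdd]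
      | inr m =>
        rw [g]
        simp only [Coprod.lift_apply_inl, Coprod.lift_apply_inr]
        rw [zpowersHom_apply, map_zpow, f_of,
          show fmap 2 = Coprod.inl (Coprod.inr (ofAdd 1)) from rfl,
          ← map_zpow, ← map_zpow, ← ofAdd_zsmul, smul_eq_mul, mul_one, ofAdd_toAdd]
      | mul a b ha hb => simp only [_root_.map_mul, ha, hb]
    | inr m =>
      rw [g]
      simp only [Coprod.lift_apply_inr]
      rw [zmod_gen m, map_pow, hZ_one, map_pow, f_omega, ← map_pow, ← zmod_gen]
    | mul a b ha hb => simp only [_root_.map_mul, ha, hb]
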